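/- Let n ≥ 4 be a natural number. For natural numbers e₁ ≤ e₂ ≤ e₃ ≤ e₄ ≤ e₅ ≤ e₆, the equation 2^{e₁} + 2^{e₂} + 2^{e₃} + 2^{e₄} + 2^{e₅} + 2^{e₆} = 4 + 2^{n+2} + 2^{n+3} holds if and only if the tuple (e₁, e₂, e₃, e₄, e₅, e₆) is one of the following nine tuples: (0, 0, 0, 0, n+2, n+3), (0, 0, 1, n+1, n+1, n+3), (0, 0, 1, n+2, n+2, n+2), (1, 1, n, n, n+1, n+3), (1, 1, n+1, n+1, n+2, n+2), (2, n−1, n−1, n, n+1, n+3), (2, n, n, n, n, n+3), (2, n, n, n+1, n+2, n+2), (2, n+1, n+1, n+1, n+1, n+2). -/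
import Mathlib



private lemma pw_pos (x : ℕ) : 0 < 2^x := Nat.two_pow_pos x
private lemma pw_mono {a b : ℕ} (h : a ≤ b) : (2:ℕ)^a ≤ 2^b :=
  Nat.pow_le_pow_right (by norm_num) h
private lemma pw_lt {a b : ℕ} (h : (2:ℕ)^a < 2^b) : a < b :=
  (Nat.pow_lt_pow_iff_right (by norm_num)).mp h

private lemma P1 {a j : ℕ} (h : (2:ℕ)^a = 2^j) : a = j :=
  Nat.pow_right_injective (le_refl 2) h

private lemma P2 {a b j : ℕ} (hab : a ≤ b) (H : (2:ℕ)^a + 2^b = 2^(j+1)) :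
    a = j ∧ b = j := by
  have p1 : (2:ℕ)^(j+1) = 2*2^j := by ring
  have pa := pw_pos a; have pj := pw_pos j
  have hab' := pw_mono hab
  have hbj : b = j := by
    have h1 : b < j + 1 := pw_lt (by linarith)
    by_contra hb
    have h2 : (2:ℕ)^(b+1) ≤ 2^j := pw_mono (by omega)
    have h3 : (2:ℕ)^(b+1) = 2*2^b := by ring
    linarith
  subst hbj
  exact ⟨P1 (by linarith), rfl⟩

private lemma P3 {a b c j : ℕ} (hab : a ≤ b) (hbc : b ≤ c)
    (H : (2:ℕ)^a + 2^b + 2^c = 2^(j+2)) : a = j ∧ b = j ∧ c = j+1 := by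
  have p1 : (2:ℕ)^(j+2) = 4*2^j := by ring
  have p2 : (2:ℕ)^(j+2) = 2*2^(j+1) := by ring
  have pa := pw_pos a; have pb := pw_pos b; have pj := pw_pos j
  have hcj : c = j + 1 := by
    have h1 : c < j + 2 := pw_lt (by linarith)
    by_contra hc
    have h2 : (2:ℕ)^a ≤ 2^j := pw_mono (by omega)
    have h3 : (2:ℕ)^b ≤ 2^j := pw_mono (by omega)
    have h4 : (2:ℕ)^c ≤ 2^j := pw_mono (by omega)
    linarith
  subst hcj
  have := P2 hab (show (2:ℕ)^a + 2^b = 2^(j+1) by linarith)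
  exact ⟨this.1, this.2, rfl⟩

private lemma L2 {a b j : ℕ} (hab : a ≤ b) (H : (2:ℕ)^a + 2^b = 3*2^j) :
    a = j ∧ b = j + 1 := by
  have p1 : (2:ℕ)^(j+2) = 4*2^j := by ring
  have p2 : (2:ℕ)^(j+1) = 2*2^j := by ring
  have pa := pw_pos a; have pj := pw_pos j
  have hbj : b = j + 1 := by
    have h1 : b < j + 2 := pw_lt (by linarith)
    by_contra hb
    have h2 : (2:ℕ)^a ≤ 2^j := pw_mono (by omega)
    have h3 : (2:ℕ)^b ≤ 2^j := pw_mono (by omega)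
    linarith
  subst hbj
  exact ⟨P1 (by linarith), rfl⟩

private lemma L3 {a b c j : ℕ} (hab : a ≤ b) (hbc : b ≤ c)
    (H : (2:ℕ)^a + 2^b + 2^c = 3*2^(j+1)) :
    (a = j ∧ b = j ∧ c = j+2) ∨ (a = j+1 ∧ b = j+1 ∧ c = j+1) := by
  have p1 : (2:ℕ)^(j+3) = 4*2^(j+1) := by ring
  have p2 : (2:ℕ)^(j+2) = 2*2^(j+1) := by ring
  have p3 : (2:ℕ)^(j+1) = 2*2^j := by ring
  have pa := pw_pos a; have pb := pw_pos b; have pj := pw_pos (j+1)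
  have hc1 : c < j + 3 := pw_lt (by linarith)
  have hc2 : j + 1 ≤ c := by
    by_contra hc
    have h2 : (2:ℕ)^a ≤ 2^j := pw_mono (by omega)
    have h3 : (2:ℕ)^b ≤ 2^j := pw_mono (by omega)
    have h4 : (2:ℕ)^c ≤ 2^j := pw_mono (by omega)
    linarith
  rcases (show c = j + 1 ∨ c = j + 2 by omega) with rfl | rfl
  · right
    have := P2 hab (show (2:ℕ)^a + 2^b = 2^(j+1+1) by
      have : (2:ℕ)^(j+1+1) = 2*2^(j+1) := by ring
      linarith)
    exact ⟨by omega, by omega, rfl⟩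
  · left
    have := P2 hab (show (2:ℕ)^a + 2^b = 2^(j+1) by linarith)
    exact ⟨this.1, this.2, rfl⟩

private lemma P4 {a b c d j : ℕ} (hab : a ≤ b) (hbc : b ≤ c) (hcd : c ≤ d)
    (H : (2:ℕ)^a + 2^b + 2^c + 2^d = 2^(j+3)) :
    (a = j ∧ b = j ∧ c = j+1 ∧ d = j+2) ∨ (a = j+1 ∧ b = j+1 ∧ c = j+1 ∧ d = j+1) := by
  have p1 : (2:ℕ)^(j+3) = 8*2^j := by ring
  have p2 : (2:ℕ)^(j+2) = 4*2^j := by ring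
  have p3 : (2:ℕ)^(j+1) = 2*2^j := by ring
  have pa := pw_pos a; have pb := pw_pos b; have pc := pw_pos c; have pj := pw_pos j
  have hd1 : d < j + 3 := pw_lt (by linarith)
  have hd2 : j + 1 ≤ d := by
    by_contra hd
    have h1 : (2:ℕ)^a ≤ 2^j := pw_mono (by omega)
    have h2 : (2:ℕ)^b ≤ 2^j := pw_mono (by omega)
    have h3 : (2:ℕ)^c ≤ 2^j := pw_mono (by omega)
    have h4 : (2:ℕ)^d ≤ 2^j := pw_mono (by omega)
    linarith
  rcases (show d = j + 1 ∨ d = j + 2 by omega) with rfl | rfl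
  · have hr : (2:ℕ)^a + 2^b + 2^c = 3*2^(j+1) := by linarith
    rcases L3 hab hbc hr with ⟨_,_,hc⟩ | ⟨h1,h2,h3⟩
    · omega
    · right; exact ⟨h1, h2, h3, rfl⟩
  · left
    have := P3 hab hbc (show (2:ℕ)^a + 2^b + 2^c = 2^(j+2) by linarith)
    exact ⟨this.1, this.2.1, this.2.2, rfl⟩

private lemma L4 {a b c d j : ℕ} (hab : a ≤ b) (hbc : b ≤ c) (hcd : c ≤ d)
    (H : (2:ℕ)^a + 2^b + 2^c + 2^d = 3*2^(j+2)) :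
    (a = j ∧ b = j ∧ c = j+1 ∧ d = j+3) ∨ (a = j+1 ∧ b = j+1 ∧ c = j+2 ∧ d = j+2) := by
  have p1 : (2:ℕ)^(j+4) = 4*2^(j+2) := by ring
  have p2 : (2:ℕ)^(j+3) = 2*2^(j+2) := by ring
  have p3 : (2:ℕ)^(j+2) = 2*2^(j+1) := by ring
  have pa := pw_pos a; have pb := pw_pos b; have pc := pw_pos c; have pj := pw_pos (j+1)
  have hd1 : d < j + 4 := pw_lt (by linarith)
  have hd2 : j + 2 ≤ d := by
    by_contra hd
    have h1 : (2:ℕ)^a ≤ 2^(j+1) := pw_mono (by omega)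
    have h2 : (2:ℕ)^b ≤ 2^(j+1) := pw_mono (by omega)
    have h3 : (2:ℕ)^c ≤ 2^(j+1) := pw_mono (by omega)
    have h4 : (2:ℕ)^d ≤ 2^(j+1) := pw_mono (by omega)
    linarith
  rcases (show d = j + 2 ∨ d = j + 3 by omega) with rfl | rfl
  · right
    have := P3 hab hbc (show (2:ℕ)^a + 2^b + 2^c = 2^(j+1+2) by
      have : (2:ℕ)^(j+1+2) = 2*2^(j+2) := by ring
      linarith)
    exact ⟨this.1, this.2.1, by omega, rfl⟩
  · left
    have := P3 hab hbc (show (2:ℕ)^a + 2^b + 2^c = 2^(j+2) by linarith)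
    exact ⟨this.1, this.2.1, this.2.2, rfl⟩

private lemma L5 {a b c d e j : ℕ} (hab : a ≤ b) (hbc : b ≤ c) (hcd : c ≤ d) (hde : d ≤ e)
    (H : (2:ℕ)^a + 2^b + 2^c + 2^d + 2^e = 3*2^(j+3)) :
    (a = j ∧ b = j ∧ c = j+1 ∧ d = j+2 ∧ e = j+4) ∨
    (a = j+1 ∧ b = j+1 ∧ c = j+1 ∧ d = j+1 ∧ e = j+4) ∨
    (a = j+1 ∧ b = j+1 ∧ c = j+2 ∧ d = j+3 ∧ e = j+3) ∨
    (a = j+2 ∧ b = j+2 ∧ c = j+2 ∧ d = j+2 ∧ e = j+3) := by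
  have p1 : (2:ℕ)^(j+5) = 4*2^(j+3) := by ring
  have p2 : (2:ℕ)^(j+4) = 2*2^(j+3) := by ring
  have p3 : (2:ℕ)^(j+3) = 2*2^(j+2) := by ring
  have pa := pw_pos a; have pb := pw_pos b; have pc := pw_pos c; have pd := pw_pos d
  have pj := pw_pos (j+2)
  have he1 : e < j + 5 := pw_lt (by linarith)
  have he2 : j + 3 ≤ e := by
    by_contra he
    have h1 : (2:ℕ)^a ≤ 2^(j+2) := pw_mono (by omega)
    have h2 : (2:ℕ)^b ≤ 2^(j+2) := pw_mono (by omega)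
    have h3 : (2:ℕ)^c ≤ 2^(j+2) := pw_mono (by omega)
    have h4 : (2:ℕ)^d ≤ 2^(j+2) := pw_mono (by omega)
    have h5 : (2:ℕ)^e ≤ 2^(j+2) := pw_mono (by omega)
    linarith
  rcases (show e = j + 3 ∨ e = j + 4 by omega) with rfl | rfl
  · have hr : (2:ℕ)^a + 2^b + 2^c + 2^d = 2^(j+1+3) := by
      have : (2:ℕ)^(j+1+3) = 2*2^(j+3) := by ring
      linarith
    rcases P4 hab hbc hcd hr with ⟨h1,h2,h3,h4⟩ | ⟨h1,h2,h3,h4⟩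
    · right; right; left; exact ⟨by omega, by omega, by omega, by omega, rfl⟩
    · right; right; right; exact ⟨by omega, by omega, by omega, by omega, rfl⟩
  · have hr : (2:ℕ)^a + 2^b + 2^c + 2^d = 2^(j+3) := by linarith
    rcases P4 hab hbc hcd hr with ⟨h1,h2,h3,h4⟩ | ⟨h1,h2,h3,h4⟩
    · left; exact ⟨h1, h2, h3, h4, rfl⟩
    · right; left; exact ⟨h1, h2, h3, h4, rfl⟩
private lemma pw_even {e : ℕ} (he : e ≠ 0) : ∃ x, (2:ℕ)^e = 2*x := by
  obtain ⟨f, rfl⟩ : ∃ f, e = f + 1 := ⟨e - 1, by omega⟩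
  exact ⟨2^f, by ring⟩

/-- Let `n ≥ 4`. For naturals `e₁ ≤ e₂ ≤ e₃ ≤ e₄ ≤ e₅ ≤ e₆`,
one has `2^e₁ + … + 2^e₆ = 4 + 2^(n+2) + 2^(n+3)` iff the tuple `(e₁,…,e₆)`
is one of the nine listed tuples. -/
theorem six_powers_of_two_sum_eq_four (n : ℕ) (hn : 4 ≤ n)
    (e₁ e₂ e₃ e₄ e₅ e₆ : ℕ)
    (h₁₂ : e₁ ≤ e₂) (h₂₃ : e₂ ≤ e₃) (h₃₄ : e₃ ≤ e₄) (h₄₅ : e₄ ≤ e₅) (h₅₆ : e₅ ≤ e₆) :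
    2 ^ e₁ + 2 ^ e₂ + 2 ^ e₃ + 2 ^ e₄ + 2 ^ e₅ + 2 ^ e₆ = 4 + 2 ^ (n + 2) + 2 ^ (n + 3) ↔
      (e₁, e₂, e₃, e₄, e₅, e₆) = (0, 0, 0, 0, n + 2, n + 3) ∨
      (e₁, e₂, e₃, e₄, e₅, e₆) = (0, 0, 1, n + 1, n + 1, n + 3) ∨
      (e₁, e₂, e₃, e₄, e₅, e₆) = (0, 0, 1, n + 2, n + 2, n + 2) ∨
      (e₁, e₂, e₃, e₄, e₅, e₆) = (1, 1, n, n, n + 1, n + 3) ∨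
      (e₁, e₂, e₃, e₄, e₅, e₆) = (1, 1, n + 1, n + 1, n + 2, n + 2) ∨
      (e₁, e₂, e₃, e₄, e₅, e₆) = (2, n - 1, n - 1, n, n + 1, n + 3) ∨
      (e₁, e₂, e₃, e₄, e₅, e₆) = (2, n, n, n, n, n + 3) ∨
      (e₁, e₂, e₃, e₄, e₅, e₆) = (2, n, n, n + 1, n + 2, n + 2) ∨
      (e₁, e₂, e₃, e₄, e₅, e₆) = (2, n + 1, n + 1, n + 1, n + 1, n + 2) := by
  obtain ⟨m, rfl⟩ : ∃ m, n = m + 4 := ⟨n - 4, by omega⟩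
  have q6 : (2:ℕ)^(m+4+2) = 2*2^(m+5) := by ring
  have q7 : (2:ℕ)^(m+4+3) = 2*2^(m+6) := by ring
  have q5 : (2:ℕ)^(m+5) = 2*2^(m+4) := by ring
  have q6' : (2:ℕ)^(m+6) = 2*2^(m+5) := by ring
  constructor
  · intro H
    rcases Nat.eq_zero_or_pos e₁ with rfl | h1
    · -- e₁ = 0
      rw [pow_zero] at H
      have he2 : e₂ = 0 := by
        by_contra h2
        obtain ⟨x2, hx2⟩ := pw_even h2
        obtain ⟨x3, hx3⟩ := pw_even (show e₃ ≠ 0 by omega)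
        obtain ⟨x4, hx4⟩ := pw_even (show e₄ ≠ 0 by omega)
        obtain ⟨x5, hx5⟩ := pw_even (show e₅ ≠ 0 by omega)
        obtain ⟨x6, hx6⟩ := pw_even (show e₆ ≠ 0 by omega)
        rw [hx2, hx3, hx4, hx5, hx6, q6, q7] at H
        omega
      subst he2
      rw [pow_zero] at H
      rcases Nat.eq_zero_or_pos e₃ with rfl | h3
      · rw [pow_zero] at H
        have he4 : e₄ = 0 := by
          by_contra h4
          obtain ⟨x4, hx4⟩ := pw_even h4
          obtain ⟨x5, hx5⟩ := pw_even (show e₅ ≠ 0 by omega)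
          obtain ⟨x6, hx6⟩ := pw_even (show e₆ ≠ 0 by omega)
          rw [hx4, hx5, hx6, q6, q7] at H
          omega
        subst he4
        rw [pow_zero] at H
        have hr : (2:ℕ)^e₅ + 2^e₆ = 3*2^(m+6) := by linarith
        obtain ⟨h5, h6⟩ := L2 h₅₆ hr
        left; simp only [Prod.mk.injEq, true_and, and_true]; omega
      · -- e₃ ≥ 1
        obtain ⟨f3, rfl⟩ : ∃ f, e₃ = f + 1 := ⟨e₃ - 1, by omega⟩
        obtain ⟨f4, rfl⟩ : ∃ f, e₄ = f + 1 := ⟨e₄ - 1, by omega⟩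
        obtain ⟨f5, rfl⟩ : ∃ f, e₅ = f + 1 := ⟨e₅ - 1, by omega⟩
        obtain ⟨f6, rfl⟩ : ∃ f, e₆ = f + 1 := ⟨e₆ - 1, by omega⟩
        have r3 : (2:ℕ)^(f3+1) = 2*2^f3 := by ring
        have r4 : (2:ℕ)^(f4+1) = 2*2^f4 := by ring
        have r5 : (2:ℕ)^(f5+1) = 2*2^f5 := by ring
        have r6 : (2:ℕ)^(f6+1) = 2*2^f6 := by ring
        have H' : (2:ℕ)^f3 + 2^f4 + 2^f5 + 2^f6 = 1 + 2^(m+5) + 2^(m+6) := by linarith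
        have hf3 : f3 = 0 := by
          by_contra hf
          obtain ⟨x3, hx3⟩ := pw_even hf
          obtain ⟨x4, hx4⟩ := pw_even (show f4 ≠ 0 by omega)
          obtain ⟨x5, hx5⟩ := pw_even (show f5 ≠ 0 by omega)
          obtain ⟨x6, hx6⟩ := pw_even (show f6 ≠ 0 by omega)
          rw [hx3, hx4, hx5, hx6, q5, q6'] at H'
          omega
        subst hf3
        rw [pow_zero] at H'
        have hr : (2:ℕ)^f4 + 2^f5 + 2^f6 = 3*2^(m+4+1) := by
          have : (2:ℕ)^(m+4+1) = 2^(m+5) := by ring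
          linarith
        rcases L3 (show f4 ≤ f5 by omega) (show f5 ≤ f6 by omega) hr with
          ⟨g4, g5, g6⟩ | ⟨g4, g5, g6⟩
        · right; left; simp only [Prod.mk.injEq, true_and, and_true]; omega
        · right; right; left; simp only [Prod.mk.injEq, true_and, and_true]; omega
    · -- e₁ ≥ 1
      obtain ⟨f1, rfl⟩ : ∃ f, e₁ = f + 1 := ⟨e₁ - 1, by omega⟩
      obtain ⟨f2, rfl⟩ : ∃ f, e₂ = f + 1 := ⟨e₂ - 1, by omega⟩
      obtain ⟨f3, rfl⟩ : ∃ f, e₃ = f + 1 := ⟨e₃ - 1, by omega⟩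
      obtain ⟨f4, rfl⟩ : ∃ f, e₄ = f + 1 := ⟨e₄ - 1, by omega⟩
      obtain ⟨f5, rfl⟩ : ∃ f, e₅ = f + 1 := ⟨e₅ - 1, by omega⟩
      obtain ⟨f6, rfl⟩ : ∃ f, e₆ = f + 1 := ⟨e₆ - 1, by omega⟩
      have r1 : (2:ℕ)^(f1+1) = 2*2^f1 := by ring
      have r2 : (2:ℕ)^(f2+1) = 2*2^f2 := by ring
      have r3 : (2:ℕ)^(f3+1) = 2*2^f3 := by ring
      have r4 : (2:ℕ)^(f4+1) = 2*2^f4 := by ring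
      have r5 : (2:ℕ)^(f5+1) = 2*2^f5 := by ring
      have r6 : (2:ℕ)^(f6+1) = 2*2^f6 := by ring
      have H' : (2:ℕ)^f1 + 2^f2 + 2^f3 + 2^f4 + 2^f5 + 2^f6
          = 2 + 2^(m+5) + 2^(m+6) := by linarith
      rcases Nat.eq_zero_or_pos f1 with rfl | hf1
      · rw [pow_zero] at H'
        have hf2 : f2 = 0 := by
          by_contra hf
          obtain ⟨x2, hx2⟩ := pw_even hf
          obtain ⟨x3, hx3⟩ := pw_even (show f3 ≠ 0 by omega)
          obtain ⟨x4, hx4⟩ := pw_even (show f4 ≠ 0 by omega)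
          obtain ⟨x5, hx5⟩ := pw_even (show f5 ≠ 0 by omega)
          obtain ⟨x6, hx6⟩ := pw_even (show f6 ≠ 0 by omega)
          rw [hx2, hx3, hx4, hx5, hx6, q5, q6'] at H'
          omega
        subst hf2
        rw [pow_zero] at H'
        have hr : (2:ℕ)^f3 + 2^f4 + 2^f5 + 2^f6 = 3*2^(m+3+2) := by
          have : (2:ℕ)^(m+3+2) = 2^(m+5) := by ring
          linarith
        rcases L4 (show f3 ≤ f4 by omega) (show f4 ≤ f5 by omega) (show f5 ≤ f6 by omega)
          hr with ⟨g3, g4, g5, g6⟩ | ⟨g3, g4, g5, g6⟩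
        · right; right; right; left; simp only [Prod.mk.injEq, true_and, and_true]; omega
        · right; right; right; right; left; simp only [Prod.mk.injEq, true_and, and_true]; omega
      · obtain ⟨g1, rfl⟩ : ∃ g, f1 = g + 1 := ⟨f1 - 1, by omega⟩
        obtain ⟨g2, rfl⟩ : ∃ g, f2 = g + 1 := ⟨f2 - 1, by omega⟩
        obtain ⟨g3, rfl⟩ : ∃ g, f3 = g + 1 := ⟨f3 - 1, by omega⟩
        obtain ⟨g4, rfl⟩ : ∃ g, f4 = g + 1 := ⟨f4 - 1, by omega⟩
        obtain ⟨g5, rfl⟩ : ∃ g, f5 = g + 1 := ⟨f5 - 1, by omega⟩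
        obtain ⟨g6, rfl⟩ : ∃ g, f6 = g + 1 := ⟨f6 - 1, by omega⟩
        have s1 : (2:ℕ)^(g1+1) = 2*2^g1 := by ring
        have s2 : (2:ℕ)^(g2+1) = 2*2^g2 := by ring
        have s3 : (2:ℕ)^(g3+1) = 2*2^g3 := by ring
        have s4 : (2:ℕ)^(g4+1) = 2*2^g4 := by ring
        have s5 : (2:ℕ)^(g5+1) = 2*2^g5 := by ring
        have s6 : (2:ℕ)^(g6+1) = 2*2^g6 := by ring
        have q4 : (2:ℕ)^(m+4) = 2*2^(m+3) := by ring
        have H'' : (2:ℕ)^g1 + 2^g2 + 2^g3 + 2^g4 + 2^g5 + 2^g6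
            = 1 + 2^(m+4) + 2^(m+5) := by linarith
        have hg1 : g1 = 0 := by
          by_contra hg
          obtain ⟨x1, hx1⟩ := pw_even hg
          obtain ⟨x2, hx2⟩ := pw_even (show g2 ≠ 0 by omega)
          obtain ⟨x3, hx3⟩ := pw_even (show g3 ≠ 0 by omega)
          obtain ⟨x4, hx4⟩ := pw_even (show g4 ≠ 0 by omega)
          obtain ⟨x5, hx5⟩ := pw_even (show g5 ≠ 0 by omega)
          obtain ⟨x6, hx6⟩ := pw_even (show g6 ≠ 0 by omega)
          rw [hx1, hx2, hx3, hx4, hx5, hx6, q4, q5] at H''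
          omega
        subst hg1
        rw [pow_zero] at H''
        have hr : (2:ℕ)^g2 + 2^g3 + 2^g4 + 2^g5 + 2^g6 = 3*2^(m+1+3) := by
          have : (2:ℕ)^(m+1+3) = 2^(m+4) := by ring
          linarith
        rcases L5 (show g2 ≤ g3 by omega) (show g3 ≤ g4 by omega) (show g4 ≤ g5 by omega)
          (show g5 ≤ g6 by omega) hr with
          ⟨k2, k3, k4, k5, k6⟩ | ⟨k2, k3, k4, k5, k6⟩ | ⟨k2, k3, k4, k5, k6⟩ |
          ⟨k2, k3, k4, k5, k6⟩
        · right; right; right; right; right; left; simp only [Prod.mk.injEq, true_and, and_true]; omega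
        · right; right; right; right; right; right; left; simp only [Prod.mk.injEq, true_and, and_true]; omega
        · right; right; right; right; right; right; right; left
          simp only [Prod.mk.injEq, true_and, and_true]; omega
        · right; right; right; right; right; right; right; right
          simp only [Prod.mk.injEq, true_and, and_true]; omega
  · intro hd
    have hs : m + 4 - 1 = m + 3 := by omega
    rcases hd with h | h | h | h | h | h | h | h | h <;>
      simp only [Prod.mk.injEq] at h <;>
      obtain ⟨rfl, rfl, rfl, rfl, rfl, rfl⟩ := h <;>
      try rw [hs]
    all_goals ring
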